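/- arXiv:1904.10249 — 2 statements merged into one kernel-verified Lean document; each statement's English description precedes it below -/
import Mathlib

section
/- In the lattice Z^{1,5} with form diag(1,-1,-1,-1,-1,-1), basis ℓ, e_1,...,e_5, and k = -3ℓ + e_1 + ... + e_5, the set of vectors e with e·e = -1 and e·k = -1 has exactly 16 elements. -/
set_option maxRecDepth 1000000
set_option maxHeartbeats 4000000

/-- The intersection form of the odd unimodular lattice `Z^{1,5}` in the basis
`ℓ, e_1, …, e_5`, i.e. `diag(1,-1,-1,-1,-1,-1)`. -/
def bform (v w : Fin 6 → ℤ) : ℤ := v 0 * w 0 - ∑ i : Fin 5, v i.succ * w i.succ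

/-- The canonical class `k = -3ℓ + e_1 + ⋯ + e_5`. -/
def kvec : Fin 6 → ℤ := ![-3, 1, 1, 1, 1, 1]

/-- The candidate finite set of lines, cut out of a finite box. -/
noncomputable def Tset : Finset (Fin 6 → ℤ) :=
  (Finset.Icc ![0,-2,-2,-2,-2,-2] ![2,2,2,2,2,2]).filter
    fun e => bform e e = -1 ∧ bform e kvec = -1

lemma Tcard : Tset.card = 16 := by decide

lemma mem_T (e : Fin 6 → ℤ) (h1 : bform e e = -1) (h2 : bform e kvec = -1) :
    e ∈ Tset := by
  have hb1 : e 0 * e 0 - (e 1 * e 1 + e 2 * e 2 + e 3 * e 3 + e 4 * e 4 + e 5 * e 5) = -1 := by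
    simpa [bform, Fin.sum_univ_five] using h1
  have hb2 : e 0 * (-3) - (e 1 + e 2 + e 3 + e 4 + e 5) = -1 := by
    simpa [bform, kvec, Fin.sum_univ_five] using h2
  have key : 2*(e 0)^2 - 3*(e 0) - 2 ≤ 0 := by
    nlinarith [sq_nonneg (e 1 - e 2), sq_nonneg (e 1 - e 3), sq_nonneg (e 1 - e 4),
      sq_nonneg (e 1 - e 5), sq_nonneg (e 2 - e 3), sq_nonneg (e 2 - e 4),
      sq_nonneg (e 2 - e 5), sq_nonneg (e 3 - e 4), sq_nonneg (e 3 - e 5),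
      sq_nonneg (e 4 - e 5), hb1, hb2]
  have ha0 : 0 ≤ e 0 := by by_contra h; push_neg at h; nlinarith [key]
  have ha2 : e 0 ≤ 2 := by by_contra h; push_neg at h; nlinarith [key]
  have bd : ∀ b : ℤ, b^2 ≤ 5 → -2 ≤ b ∧ b ≤ 2 := by
    intro b hb; constructor <;> nlinarith [hb]
  have h1' := bd (e 1) (by nlinarith [sq_nonneg (e 2), sq_nonneg (e 3), sq_nonneg (e 4), sq_nonneg (e 5), hb1, ha0, ha2])
  have h2' := bd (e 2) (by nlinarith [sq_nonneg (e 1), sq_nonneg (e 3), sq_nonneg (e 4), sq_nonneg (e 5), hb1, ha0, ha2])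
  have h3' := bd (e 3) (by nlinarith [sq_nonneg (e 2), sq_nonneg (e 1), sq_nonneg (e 4), sq_nonneg (e 5), hb1, ha0, ha2])
  have h4' := bd (e 4) (by nlinarith [sq_nonneg (e 2), sq_nonneg (e 3), sq_nonneg (e 1), sq_nonneg (e 5), hb1, ha0, ha2])
  have h5' := bd (e 5) (by nlinarith [sq_nonneg (e 2), sq_nonneg (e 3), sq_nonneg (e 4), sq_nonneg (e 1), hb1, ha0, ha2])
  rw [Tset, Finset.mem_filter, Finset.mem_Icc]
  refine ⟨⟨?_, ?_⟩, h1, h2⟩ <;> intro i <;> fin_cases i <;>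
    first
      | exact ha0 | exact ha2
      | exact h1'.1 | exact h1'.2
      | exact h2'.1 | exact h2'.2
      | exact h3'.1 | exact h3'.2
      | exact h4'.1 | exact h4'.2
      | exact h5'.1 | exact h5'.2

/-- In `Z^{1,5}` with `k = -3ℓ + e_1 + ⋯ + e_5` there are exactly 16 vectors `e` with
`e·e = -1` and `e·k = -1` (the 16 lines on a degree 4 Del Pezzo surface). -/
theorem statement11 :
    Nat.card {e : Fin 6 → ℤ // bform e e = -1 ∧ bform e kvec = -1} = 16 := by
  have hset : {e : Fin 6 → ℤ | bform e e = -1 ∧ bform e kvec = -1} = ↑Tset := by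
    ext e
    simp only [Set.mem_setOf_eq, Finset.mem_coe]
    constructor
    · rintro ⟨h1, h2⟩; exact mem_T e h1 h2
    · intro h
      exact (Finset.mem_filter.mp h).2
  calc Nat.card {e : Fin 6 → ℤ // bform e e = -1 ∧ bform e kvec = -1}
      = ({e : Fin 6 → ℤ | bform e e = -1 ∧ bform e kvec = -1}).ncard :=
        Nat.card_coe_set_eq _
    _ = 16 := by rw [hset, Set.ncard_coe_finset, Tcard]
end

section
/- In the lattice Z^{1,5} with k = -3ℓ + e_1 + ... + e_5, for f_1 = 2ℓ - e_1 - ... - e_5 and f_2 = ℓ (so f_1 + f_2 = -k), the sublattice ⟨f_1, f_2⟩^⊥ contains exactly 20 vectors α with α·α = -2, forming a root system of type A_4; while for f_1 = 2ℓ - e_1 - ... - e_5 + e_1 and f_2 = ℓ - e_1, the sublattice ⟨f_1, f_2⟩^⊥ contains exactly 24 vectors α with α·α = -2, forming a root system of type D_4. -/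
/-- Decode a function `Fin 6 → Fin 3` into an integer vector with entries in `[-1,1]`. -/
def dec6 (g : Fin 6 → Fin 3) : Fin 6 → ℤ := fun i => (g i : ℤ) - 1

/-- Any subtype of integer vectors whose members have all entries in `[-1,1]` is
equivalent to the corresponding subtype of `Fin 6 → Fin 3`. -/
def boundedEquiv (P : (Fin 6 → ℤ) → Prop)
    (hb : ∀ α, P α → ∀ i, -1 ≤ α i ∧ α i ≤ 1) :
    {α : Fin 6 → ℤ // P α} ≃ {g : Fin 6 → Fin 3 // P (dec6 g)} where
  toFun α := ⟨fun i => ⟨(α.1 i + 1).toNat, by have := hb α.1 α.2 i; omega⟩, by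
    have h : dec6 (fun i => (⟨(α.1 i + 1).toNat, by have := hb α.1 α.2 i; omega⟩ : Fin 3))
        = α.1 := by
      funext i
      have := hb α.1 α.2 i
      simp only [dec6]
      omega
    rw [h]; exact α.2⟩
  invFun g := ⟨dec6 g.1, g.2⟩
  left_inv α := by
    ext i
    have := hb α.1 α.2 i
    simp only [dec6]
    omega
  right_inv g := by
    ext i
    simp only [dec6]
    omega

lemma int_le_sq (a : ℤ) : a ≤ a ^ 2 := by
  rcases le_or_gt a 0 with h | h
  · nlinarith [sq_nonneg a]
  · nlinarith [mul_nonneg (by linarith : (0:ℤ) ≤ a) (by linarith : (0:ℤ) ≤ a - 1)]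

lemma int_neg_le_sq (a : ℤ) : -a ≤ a ^ 2 := by
  have := int_le_sq (-a); simpa using this

lemma int_abs_le_one (x : ℤ) (h : x ^ 2 ≤ 2) : -1 ≤ x ∧ x ≤ 1 := by
  constructor <;> nlinarith [int_le_sq x, int_neg_le_sq x]

lemma bform_expand (v w : Fin 6 → ℤ) :
    bform v w = v 0 * w 0 - (v 1 * w 1 + v 2 * w 2 + v 3 * w 3 + v 4 * w 4 + v 5 * w 5) := by
  simp [bform, Fin.sum_univ_five]

set_option maxHeartbeats 2000000 in
/-- In `Z^{1,5}` with `k = -3ℓ + e_1 + ⋯ + e_5`: for `f_1 = 2ℓ - e_1 - ⋯ - e_5` and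
`f_2 = ℓ`, the orthogonal complement `⟨f_1,f_2⟩^⊥` contains exactly 20 vectors of
square `-2` (a root system of type `A_4`); for `f_1 = 2ℓ - e_2 - e_3 - e_4 - e_5` and
`f_2 = ℓ - e_1`, it contains exactly 24 vectors of square `-2` (type `D_4`). -/
theorem statement14 :
    Nat.card {α : Fin 6 → ℤ //
      bform α ![2, -1, -1, -1, -1, -1] = 0 ∧ bform α ![1, 0, 0, 0, 0, 0] = 0 ∧
      bform α α = -2} = 20 ∧
    Nat.card {α : Fin 6 → ℤ //
      bform α ![2, 0, -1, -1, -1, -1] = 0 ∧ bform α ![1, -1, 0, 0, 0, 0] = 0 ∧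
      bform α α = -2} = 24 := by
  constructor
  · have hb : ∀ α : Fin 6 → ℤ,
        (bform α ![2, -1, -1, -1, -1, -1] = 0 ∧ bform α ![1, 0, 0, 0, 0, 0] = 0 ∧
          bform α α = -2) → ∀ i, -1 ≤ α i ∧ α i ≤ 1 := by
      rintro α ⟨h1, h2, h3⟩ i
      rw [bform_expand] at h1 h2 h3
      simp [show (![2,-1,-1,-1,-1,-1] : Fin 6 → ℤ) 5 = -1 from rfl] at h1
      simp [show (![1,0,0,0,0,0] : Fin 6 → ℤ) 5 = 0 from rfl] at h2
      have e0 : α 0 = 0 := by linarith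
      have hs : α 1 ^ 2 + α 2 ^ 2 + α 3 ^ 2 + α 4 ^ 2 + α 5 ^ 2 = 2 := by nlinarith
      fin_cases i
      · exact int_abs_le_one (α 0) (by nlinarith)
      · exact int_abs_le_one (α 1) (by nlinarith [sq_nonneg (α 2), sq_nonneg (α 3), sq_nonneg (α 4), sq_nonneg (α 5)])
      · exact int_abs_le_one (α 2) (by nlinarith [sq_nonneg (α 1), sq_nonneg (α 3), sq_nonneg (α 4), sq_nonneg (α 5)])
      · exact int_abs_le_one (α 3) (by nlinarith [sq_nonneg (α 1), sq_nonneg (α 2), sq_nonneg (α 4), sq_nonneg (α 5)])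
      · exact int_abs_le_one (α 4) (by nlinarith [sq_nonneg (α 1), sq_nonneg (α 2), sq_nonneg (α 3), sq_nonneg (α 5)])
      · exact int_abs_le_one (α 5) (by nlinarith [sq_nonneg (α 1), sq_nonneg (α 2), sq_nonneg (α 3), sq_nonneg (α 4)])
    rw [Nat.card_congr (boundedEquiv _ hb), Nat.card_eq_fintype_card]
    decide
  · have hb : ∀ α : Fin 6 → ℤ,
        (bform α ![2, 0, -1, -1, -1, -1] = 0 ∧ bform α ![1, -1, 0, 0, 0, 0] = 0 ∧
          bform α α = -2) → ∀ i, -1 ≤ α i ∧ α i ≤ 1 := by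
      rintro α ⟨h1, h2, h3⟩ i
      rw [bform_expand] at h1 h2 h3
      simp [show (![2,0,-1,-1,-1,-1] : Fin 6 → ℤ) 5 = -1 from rfl] at h1
      simp [show (![1,-1,0,0,0,0] : Fin 6 → ℤ) 5 = 0 from rfl] at h2
      -- h1 : α 0 * 2 + α 2 + α 3 + α 4 + α 5 = 0 (in some simp-normal form)
      -- h2 : α 0 + α 1 = 0
      have e1 : α 1 = -α 0 := by linarith
      have e1sq : α 1 * α 1 = α 0 * α 0 := by rw [e1]; ring
      have hs : α 2 ^ 2 + α 3 ^ 2 + α 4 ^ 2 + α 5 ^ 2 = 2 := by nlinarith [e1sq]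
      have hup : α 2 + α 3 + α 4 + α 5 ≤ 2 := by
        nlinarith [int_le_sq (α 2), int_le_sq (α 3), int_le_sq (α 4), int_le_sq (α 5)]
      have hlo : -2 ≤ α 2 + α 3 + α 4 + α 5 := by
        nlinarith [int_neg_le_sq (α 2), int_neg_le_sq (α 3), int_neg_le_sq (α 4),
          int_neg_le_sq (α 5)]
      fin_cases i
      · exact (⟨by linarith, by linarith⟩ : -1 ≤ α 0 ∧ α 0 ≤ 1)
      · exact (⟨by linarith, by linarith⟩ : -1 ≤ α 1 ∧ α 1 ≤ 1)
      · exact int_abs_le_one (α 2) (by nlinarith [sq_nonneg (α 3), sq_nonneg (α 4), sq_nonneg (α 5)])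
      · exact int_abs_le_one (α 3) (by nlinarith [sq_nonneg (α 2), sq_nonneg (α 4), sq_nonneg (α 5)])
      · exact int_abs_le_one (α 4) (by nlinarith [sq_nonneg (α 2), sq_nonneg (α 3), sq_nonneg (α 5)])
      · exact int_abs_le_one (α 5) (by nlinarith [sq_nonneg (α 2), sq_nonneg (α 3), sq_nonneg (α 4)])
    rw [Nat.card_congr (boundedEquiv _ hb), Nat.card_eq_fintype_card]
    decide
end
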